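/- Let d ≥ 1 and let U, V be d × d unitary matrices. Define the Haar-averaged fidelity F̄(U,V) := ∫ |⟨ψ| V† U |ψ⟩|² dψ, where the integral is over Haar-random pure states |ψ⟩ in ℂ^d (equivalently, |ψ⟩ = W|e₀⟩ with W drawn from the Haar probability measure on the unitary group U(d) and |e₀⟩ a fixed unit vector). Then C_HST(U,V) = ((d+1)/d) · (1 − F̄(U,V)). -/

import Mathlib

open Matrix Complex MeasureTheory

noncomputable section

/-- The Borel σ-algebra on the unitary group `U(d)` (as a subspace of the matrices). -/
instance (d : ℕ) : MeasurableSpace (Matrix.unitaryGroup (Fin d) ℂ) := borel _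

instance (d : ℕ) : BorelSpace (Matrix.unitaryGroup (Fin d) ℂ) := ⟨rfl⟩

/-- The Hilbert-Schmidt test cost `C_HST(U,V) = 1 - |Tr(V†U)|²/d²` for `d × d` matrices. -/
def CHSTd (d : ℕ) (U V : Matrix (Fin d) (Fin d) ℂ) : ℝ :=
  1 - ‖(Vᴴ * U).trace‖ ^ 2 / (d : ℝ) ^ 2

/-- The fidelity `|⟨ψ| V† U |ψ⟩|²` for the pure state `|ψ⟩ = W e₀`. -/
def fid (d : ℕ) (U V : Matrix (Fin d) (Fin d) ℂ) (e₀ : Fin d → ℂ)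
    (W : Matrix.unitaryGroup (Fin d) ℂ) : ℝ :=
  ‖star ((W : Matrix (Fin d) (Fin d) ℂ).mulVec e₀) ⬝ᵥ
      ((Vᴴ * U).mulVec ((W : Matrix (Fin d) (Fin d) ℂ).mulVec e₀))‖ ^ 2

/-- The Haar-averaged fidelity `F̄(U,V) = ∫ |⟨ψ| V†U |ψ⟩|² dψ`, where `|ψ⟩ = W e₀` with
`W` drawn from the Haar probability measure `μ` on the unitary group `U(d)`. -/
def Fbar (d : ℕ) (U V : Matrix (Fin d) (Fin d) ℂ) (e₀ : Fin d → ℂ)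
    (μ : Measure (Matrix.unitaryGroup (Fin d) ℂ)) : ℝ :=
  ∫ W, fid d U V e₀ W ∂μ

namespace Stmt3Aux
variable {d : ℕ}

/-- the random state -/
def psi (e₀ : Fin d → ℂ) (W : Matrix.unitaryGroup (Fin d) ℂ) : Fin d → ℂ :=
  (W : Matrix (Fin d) (Fin d) ℂ).mulVec e₀

lemma psi_continuous (e₀ : Fin d → ℂ) (a : Fin d) :
    Continuous (fun W : Matrix.unitaryGroup (Fin d) ℂ => psi e₀ W a) := by
  unfold psi Matrix.mulVec dotProduct
  refine continuous_finset_sum _ (fun j _ => ?_)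
  exact (continuous_subtype_val.matrix_elem a j).mul
    continuous_const

lemma psi_inner (e₀ : Fin d → ℂ) (he₀ : star e₀ ⬝ᵥ e₀ = 1) (W : Matrix.unitaryGroup (Fin d) ℂ) :
    ∑ x, (starRingEnd ℂ) (psi e₀ W x) * psi e₀ W x = 1 := by
  have h : star (psi e₀ W) ⬝ᵥ psi e₀ W = 1 := by
    unfold psi
    rw [Matrix.star_mulVec, Matrix.dotProduct_mulVec, Matrix.vecMul_vecMul]
    have : star e₀ ᵥ* ((W : Matrix (Fin d) (Fin d) ℂ)ᴴ * (W : Matrix (Fin d) (Fin d) ℂ)) = star e₀ := by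
      rw [← Matrix.star_eq_conjTranspose, (Matrix.mem_unitaryGroup_iff'.mp W.2 : _)]
      simp
    rw [this, he₀]
  simpa [dotProduct, Pi.star_apply, RCLike.star_def] using h

lemma psi_bound (e₀ : Fin d → ℂ) (he₀ : star e₀ ⬝ᵥ e₀ = 1) (W : Matrix.unitaryGroup (Fin d) ℂ)
    (a : Fin d) : ‖psi e₀ W a‖ ≤ 1 := by
  have h := psi_inner e₀ he₀ W
  have h2 : ∑ x, Complex.normSq (psi e₀ W x) = 1 := by
    have := congrArg Complex.re h
    simpa [Complex.mul_conj', Complex.normSq_apply] using this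
  have h3 : Complex.normSq (psi e₀ W a) ≤ 1 := by
    rw [← h2]
    exact Finset.single_le_sum (f := fun x => Complex.normSq (psi e₀ W x))
      (fun x _ => Complex.normSq_nonneg _) (Finset.mem_univ a)
  have h4 : ‖psi e₀ W a‖ ^ 2 ≤ 1 := by rw [Complex.sq_norm]; exact h3
  nlinarith [norm_nonneg (psi e₀ W a)]


/-- a degree-4 monomial in the state coordinates -/
def mm (e₀ : Fin d → ℂ) (a b c e : Fin d) (W : Matrix.unitaryGroup (Fin d) ℂ) : ℂ :=
  psi e₀ W a * (starRingEnd ℂ) (psi e₀ W b) * psi e₀ W c * (starRingEnd ℂ) (psi e₀ W e)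

lemma mm_continuous (e₀ : Fin d → ℂ) (a b c e : Fin d) : Continuous (mm e₀ a b c e) := by
  unfold mm
  exact (((psi_continuous e₀ a).mul ((Complex.continuous_conj).comp
    (psi_continuous e₀ b))).mul (psi_continuous e₀ c)).mul
    ((Complex.continuous_conj).comp (psi_continuous e₀ e))

lemma mm_bound (e₀ : Fin d → ℂ) (he₀ : star e₀ ⬝ᵥ e₀ = 1) (a b c e : Fin d)
    (W : Matrix.unitaryGroup (Fin d) ℂ) : ‖mm e₀ a b c e W‖ ≤ 1 := by
  unfold mm
  have h := psi_bound e₀ he₀ W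
  calc ‖psi e₀ W a * (starRingEnd ℂ) (psi e₀ W b) * psi e₀ W c * (starRingEnd ℂ) (psi e₀ W e)‖
      = ‖psi e₀ W a‖ * ‖psi e₀ W b‖ * ‖psi e₀ W c‖ * ‖psi e₀ W e‖ := by
        simp [norm_mul]
    _ ≤ 1 * 1 * 1 * 1 := by
        gcongr <;> first | exact h a | exact h b | exact h c | exact h e
    _ = 1 := by norm_num

lemma mm_integrable (e₀ : Fin d → ℂ) (he₀ : star e₀ ⬝ᵥ e₀ = 1)
    (μ : Measure (Matrix.unitaryGroup (Fin d) ℂ)) [IsProbabilityMeasure μ] (a b c e : Fin d) :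
    Integrable (mm e₀ a b c e) μ :=
  ⟨(mm_continuous e₀ a b c e).aestronglyMeasurable,
    HasFiniteIntegral.of_bounded (C := 1) (ae_of_all _ (mm_bound e₀ he₀ a b c e))⟩

/-- the 4th moment -/
def TT (e₀ : Fin d → ℂ) (μ : Measure (Matrix.unitaryGroup (Fin d) ℂ)) (a b c e : Fin d) : ℂ :=
  ∫ W, mm e₀ a b c e W ∂μ

/-- invariance of the moments under a fixed unitary -/
lemma TT_invariance (e₀ : Fin d → ℂ) (μ : Measure (Matrix.unitaryGroup (Fin d) ℂ))
    [μ.IsHaarMeasure] (A : Matrix.unitaryGroup (Fin d) ℂ) (a b c e : Fin d) :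
    TT e₀ μ a b c e = ∫ W,
      ((A : Matrix (Fin d) (Fin d) ℂ).mulVec (psi e₀ W) a *
        (starRingEnd ℂ) ((A : Matrix (Fin d) (Fin d) ℂ).mulVec (psi e₀ W) b) *
        (A : Matrix (Fin d) (Fin d) ℂ).mulVec (psi e₀ W) c *
        (starRingEnd ℂ) ((A : Matrix (Fin d) (Fin d) ℂ).mulVec (psi e₀ W) e)) ∂μ := by
  have h := MeasureTheory.integral_mul_left_eq_self (μ := μ) (mm e₀ a b c e) A
  rw [TT, ← h]
  congr 1
  funext W
  have hpsi : psi e₀ (A * W) = (A : Matrix (Fin d) (Fin d) ℂ).mulVec (psi e₀ W) := by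
    unfold psi
    rw [Matrix.mulVec_mulVec]
    rfl
  rw [mm, hpsi]


/-- diagonal phase unitary: `I` at position `j`, `1` elsewhere -/
def phaseU (j : Fin d) : Matrix.unitaryGroup (Fin d) ℂ :=
  ⟨Matrix.diagonal (fun i => if i = j then Complex.I else 1), by
    rw [Matrix.mem_unitaryGroup_iff, Matrix.star_eq_conjTranspose,
      Matrix.diagonal_conjTranspose, Matrix.diagonal_mul_diagonal]
    ext i k
    by_cases h2 : i = k
    · subst h2
      by_cases h : i = j <;>
        simp [Matrix.diagonal_apply, Matrix.one_apply, h, Pi.star_apply, Complex.conj_I,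
          Complex.I_mul_I]
    · simp [Matrix.diagonal_apply, Matrix.one_apply, h2]⟩

lemma TT_phase (e₀ : Fin d → ℂ) (μ : Measure (Matrix.unitaryGroup (Fin d) ℂ))
    [μ.IsHaarMeasure] (j a b c e : Fin d) :
    TT e₀ μ a b c e = ((if a = j then Complex.I else 1) *
      (starRingEnd ℂ) (if b = j then Complex.I else 1) * (if c = j then Complex.I else 1) *
      (starRingEnd ℂ) (if e = j then Complex.I else 1)) * TT e₀ μ a b c e := by
  have hco : (phaseU j : Matrix (Fin d) (Fin d) ℂ) =
      Matrix.diagonal (fun i => if i = j then Complex.I else 1) := rfl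
  calc TT e₀ μ a b c e = ∫ W,
      ((phaseU j : Matrix (Fin d) (Fin d) ℂ).mulVec (psi e₀ W) a *
        (starRingEnd ℂ) ((phaseU j : Matrix (Fin d) (Fin d) ℂ).mulVec (psi e₀ W) b) *
        (phaseU j : Matrix (Fin d) (Fin d) ℂ).mulVec (psi e₀ W) c *
        (starRingEnd ℂ) ((phaseU j : Matrix (Fin d) (Fin d) ℂ).mulVec (psi e₀ W) e)) ∂μ :=
      TT_invariance e₀ μ (phaseU j) a b c e
    _ = ∫ W, ((if a = j then Complex.I else 1) *
        (starRingEnd ℂ) (if b = j then Complex.I else 1) * (if c = j then Complex.I else 1) *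
        (starRingEnd ℂ) (if e = j then Complex.I else 1)) * mm e₀ a b c e W ∂μ := by
      congr 1
      funext W
      rw [hco, Matrix.mulVec_diagonal, Matrix.mulVec_diagonal, Matrix.mulVec_diagonal,
        Matrix.mulVec_diagonal, mm]
      simp only [_root_.map_mul]
      ring
    _ = _ := MeasureTheory.integral_const_mul _ _

/-- the vanishing of unbalanced 4th moments -/
lemma TT_vanish (e₀ : Fin d → ℂ) (μ : Measure (Matrix.unitaryGroup (Fin d) ℂ))
    [μ.IsHaarMeasure] (a b c e : Fin d) (h : ¬((a = b ∧ c = e) ∨ (a = e ∧ c = b))) :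
    TT e₀ μ a b c e = 0 := by
  by_contra hT
  have key : ∀ j : Fin d, ((if a = j then Complex.I else 1) *
      (starRingEnd ℂ) (if b = j then Complex.I else 1) * (if c = j then Complex.I else 1) *
      (starRingEnd ℂ) (if e = j then Complex.I else 1)) = 1 := by
    intro j
    have h1 := (TT_phase e₀ μ j a b c e).symm
    nth_rewrite 2 [show TT e₀ μ a b c e = 1 * TT e₀ μ a b c e from (one_mul _).symm] at h1
    exact mul_right_cancel₀ hT h1
  by_cases hab : a = b
  · have hce : ¬ c = e := fun h' => h (Or.inl ⟨hab, h'⟩)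
    have hec : ¬ e = c := fun h' => hce h'.symm
    have hkey := key c
    rw [if_pos rfl, if_neg hec, ← hab] at hkey
    by_cases hac : a = c
    · rw [if_pos hac] at hkey
      norm_num [Complex.conj_I, Complex.ext_iff] at hkey
    · rw [if_neg hac] at hkey
      norm_num [Complex.ext_iff] at hkey
  · by_cases hae : a = e
    · have hcb : ¬ c = b := fun h' => h (Or.inr ⟨hae, h'⟩)
      have hbc : ¬ b = c := fun h' => hcb h'.symm
      have hkey := key c
      rw [if_pos rfl, if_neg hbc, ← hae] at hkey
      by_cases hac : a = c
      · rw [if_pos hac] at hkey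
        norm_num [Complex.conj_I, Complex.ext_iff] at hkey
      · rw [if_neg hac] at hkey
        norm_num [Complex.ext_iff] at hkey
    · have hba : ¬ b = a := fun h' => hab h'.symm
      have hea : ¬ e = a := fun h' => hae h'.symm
      have hkey := key a
      rw [if_pos rfl, if_neg hba, if_neg hea] at hkey
      by_cases hca : c = a
      · rw [if_pos hca] at hkey
        norm_num [Complex.ext_iff] at hkey
      · rw [if_neg hca] at hkey
        norm_num [Complex.ext_iff] at hkey


def rc : ℂ := ((Real.sqrt 2)⁻¹ : ℝ)
lemma rc_mul_rc : rc * rc = 1/2 := by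
  rw [rc, ← Complex.ofReal_mul, ← mul_inv, Real.mul_self_sqrt (by norm_num : (2:ℝ) ≥ 0)]
  norm_num
lemma conj_rc : (starRingEnd ℂ) rc = rc := Complex.conj_ofReal _

def hadR (p q : Fin d) : Matrix (Fin d) (Fin d) ℂ :=
  Matrix.of fun i j =>
    if i = p then (if j = p then rc else if j = q then rc else 0)
    else if i = q then (if j = p then rc else if j = q then -rc else 0)
    else (if j = i then 1 else 0)

lemma hadR_row (p q : Fin d) (hpq : p ≠ q) (w : Fin d → ℂ) (i : Fin d) :
    ∑ j, hadR p q i j * w j =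
      if i = p then rc * (w p + w q) else if i = q then rc * (w p - w q) else w i := by
  by_cases hip : i = p
  · subst hip
    rw [if_pos rfl]
    have hj : ∀ j, hadR i q i j * w j =
        (if j = i then rc * w i else 0) + (if j = q then rc * w q else 0) := by
      intro j
      simp only [hadR, Matrix.of_apply, if_pos rfl]
      split_ifs <;> simp_all <;> ring
    rw [Finset.sum_congr rfl (fun j _ => hj j), Finset.sum_add_distrib,
      Finset.sum_ite_eq' Finset.univ i (fun j => rc * w i),
      Finset.sum_ite_eq' Finset.univ q (fun j => rc * w q)]
    simp [mul_add]
  · by_cases hiq : i = q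
    · subst hiq
      rw [if_neg hip, if_pos rfl]
      have hj : ∀ j, hadR p i i j * w j =
          (if j = p then rc * w p else 0) + (if j = i then -rc * w i else 0) := by
        intro j
        simp only [hadR, Matrix.of_apply, if_neg hip, if_pos rfl]
        split_ifs <;> simp_all <;> ring
      rw [Finset.sum_congr rfl (fun j _ => hj j), Finset.sum_add_distrib,
        Finset.sum_ite_eq' Finset.univ p (fun j => rc * w p),
        Finset.sum_ite_eq' Finset.univ i (fun j => -rc * w i)]
      simp [mul_sub]
      ring
    · rw [if_neg hip, if_neg hiq]
      have hj : ∀ j, hadR p q i j * w j = (if j = i then w i else 0) := by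
        intro j
        simp only [hadR, Matrix.of_apply, if_neg hip, if_neg hiq]
        split_ifs <;> simp_all
      rw [Finset.sum_congr rfl (fun j _ => hj j),
        Finset.sum_ite_eq' Finset.univ i (fun j => w i)]
      simp

lemma hadR_mem (p q : Fin d) (hpq : p ≠ q) : hadR p q ∈ Matrix.unitaryGroup (Fin d) ℂ := by
  rw [Matrix.mem_unitaryGroup_iff]
  ext i k
  have hentry : (hadR p q * star (hadR p q)) i k =
      ∑ j, hadR p q i j * (starRingEnd ℂ) (hadR p q k j) := by
    simp [Matrix.mul_apply, Matrix.star_eq_conjTranspose, Matrix.conjTranspose_apply]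
  rw [hentry, hadR_row p q hpq (fun j => (starRingEnd ℂ) (hadR p q k j)) i]
  simp only [hadR, Matrix.of_apply, Matrix.one_apply, apply_ite (starRingEnd ℂ), conj_rc,
    map_neg, map_zero, _root_.map_one]
  split_ifs <;> simp_all
  all_goals linear_combination (2:ℂ) * rc_mul_rc


def hadU (p q : Fin d) (hpq : p ≠ q) : Matrix.unitaryGroup (Fin d) ℂ :=
  ⟨hadR p q, hadR_mem p q hpq⟩

/-- expansion of a quadratic-quartic integral into moments -/
lemma integral_quad (e₀ : Fin d → ℂ) (he₀ : star e₀ ⬝ᵥ e₀ = 1)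
    (μ : Measure (Matrix.unitaryGroup (Fin d) ℂ)) [IsProbabilityMeasure μ]
    (c₁ c₂ c₃ c₄ : Fin d → ℂ) (s : Finset (Fin d)) :
    ∫ W, (∑ x ∈ s, c₁ x * psi e₀ W x) * (starRingEnd ℂ) (∑ y ∈ s, c₂ y * psi e₀ W y) *
        (∑ z ∈ s, c₃ z * psi e₀ W z) * (starRingEnd ℂ) (∑ w ∈ s, c₄ w * psi e₀ W w) ∂μ
      = ∑ x ∈ s, ∑ y ∈ s, ∑ z ∈ s, ∑ w ∈ s,
          c₁ w * (starRingEnd ℂ) (c₂ z) * c₃ y * (starRingEnd ℂ) (c₄ x) * TT e₀ μ w z y x := by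
  have hpt : ∀ W : Matrix.unitaryGroup (Fin d) ℂ,
      (∑ x ∈ s, c₁ x * psi e₀ W x) * (starRingEnd ℂ) (∑ y ∈ s, c₂ y * psi e₀ W y) *
        (∑ z ∈ s, c₃ z * psi e₀ W z) * (starRingEnd ℂ) (∑ w ∈ s, c₄ w * psi e₀ W w)
      = ∑ x ∈ s, ∑ y ∈ s, ∑ z ∈ s, ∑ w ∈ s,
          c₁ w * (starRingEnd ℂ) (c₂ z) * c₃ y * (starRingEnd ℂ) (c₄ x) * mm e₀ w z y x W := by
    intro W
    rw [map_sum, map_sum]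
    simp only [Finset.sum_mul, Finset.mul_sum]
    refine Finset.sum_congr rfl fun x _ => ?_
    refine Finset.sum_congr rfl fun y _ => ?_
    refine Finset.sum_congr rfl fun z _ => ?_
    refine Finset.sum_congr rfl fun w _ => ?_
    rw [mm]
    simp only [_root_.map_mul]
    ring
  have hint : ∀ x y z w : Fin d, Integrable
      (fun W => c₁ w * (starRingEnd ℂ) (c₂ z) * c₃ y * (starRingEnd ℂ) (c₄ x) *
        mm e₀ w z y x W) μ :=
    fun x y z w => (mm_integrable e₀ he₀ μ w z y x).const_mul _
  calc ∫ W, (∑ x ∈ s, c₁ x * psi e₀ W x) * (starRingEnd ℂ) (∑ y ∈ s, c₂ y * psi e₀ W y) *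
        (∑ z ∈ s, c₃ z * psi e₀ W z) * (starRingEnd ℂ) (∑ w ∈ s, c₄ w * psi e₀ W w) ∂μ
      = ∫ W, ∑ x ∈ s, ∑ y ∈ s, ∑ z ∈ s, ∑ w ∈ s,
          c₁ w * (starRingEnd ℂ) (c₂ z) * c₃ y * (starRingEnd ℂ) (c₄ x) * mm e₀ w z y x W ∂μ := by
        congr 1
        exact funext hpt
    _ = ∑ x ∈ s, ∑ y ∈ s, ∑ z ∈ s, ∑ w ∈ s,
          c₁ w * (starRingEnd ℂ) (c₂ z) * c₃ y * (starRingEnd ℂ) (c₄ x) * TT e₀ μ w z y x := by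
        rw [MeasureTheory.integral_finset_sum s (fun x _ => MeasureTheory.integrable_finset_sum _
          (fun y _ => MeasureTheory.integrable_finset_sum _ (fun z _ => MeasureTheory.integrable_finset_sum _
            (fun w _ => hint x y z w))))]
        refine Finset.sum_congr rfl fun x _ => ?_
        rw [MeasureTheory.integral_finset_sum s (fun y _ => MeasureTheory.integrable_finset_sum _
          (fun z _ => MeasureTheory.integrable_finset_sum _ (fun w _ => hint x y z w)))]
        refine Finset.sum_congr rfl fun y _ => ?_
        rw [MeasureTheory.integral_finset_sum s (fun z _ => MeasureTheory.integrable_finset_sum _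
          (fun w _ => hint x y z w))]
        refine Finset.sum_congr rfl fun z _ => ?_
        rw [MeasureTheory.integral_finset_sum s (fun w _ => hint x y z w)]
        refine Finset.sum_congr rfl fun w _ => ?_
        rw [TT, MeasureTheory.integral_const_mul]


lemma TT_perm1 (e₀ : Fin d → ℂ) (μ : Measure (Matrix.unitaryGroup (Fin d) ℂ)) (a b : Fin d) :
    TT e₀ μ a b b a = TT e₀ μ a a b b := by
  unfold TT; congr 1; funext W; unfold mm; ring

lemma TT_perm2 (e₀ : Fin d → ℂ) (μ : Measure (Matrix.unitaryGroup (Fin d) ℂ)) (a b : Fin d) :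
    TT e₀ μ b a a b = TT e₀ μ a a b b := by
  unfold TT; congr 1; funext W; unfold mm; ring

lemma TT_perm3 (e₀ : Fin d → ℂ) (μ : Measure (Matrix.unitaryGroup (Fin d) ℂ)) (a b : Fin d) :
    TT e₀ μ b b a a = TT e₀ μ a a b b := by
  unfold TT; congr 1; funext W; unfold mm; ring

lemma rc_pow_four : rc ^ 4 = 1 / 4 := by
  have h : rc ^ 4 = (rc * rc) ^ 2 := by ring
  rw [h, rc_mul_rc]; norm_num

lemma TT_had (e₀ : Fin d → ℂ) (he₀ : star e₀ ⬝ᵥ e₀ = 1)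
    (μ : Measure (Matrix.unitaryGroup (Fin d) ℂ)) [μ.IsHaarMeasure] [IsProbabilityMeasure μ]
    (p q : Fin d) (hpq : p ≠ q) :
    TT e₀ μ p p p p = TT e₀ μ q q q q ∧ TT e₀ μ p p p p = 2 * TT e₀ μ p p q q := by
  have hrowp : ∀ v : Fin d → ℂ, (hadU p q hpq : Matrix (Fin d) (Fin d) ℂ).mulVec v p =
      ∑ x ∈ ({p, q} : Finset (Fin d)), (fun _ : Fin d => rc) x * v x := by
    intro v
    have h0 : (hadU p q hpq : Matrix (Fin d) (Fin d) ℂ).mulVec v p =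
        ∑ j, hadR p q p j * v j := rfl
    rw [h0, hadR_row p q hpq v p, if_pos rfl, Finset.sum_pair hpq]
    ring
  have hrowq : ∀ v : Fin d → ℂ, (hadU p q hpq : Matrix (Fin d) (Fin d) ℂ).mulVec v q =
      ∑ x ∈ ({p, q} : Finset (Fin d)), (fun x : Fin d => if x = q then -rc else rc) x * v x := by
    intro v
    have h0 : (hadU p q hpq : Matrix (Fin d) (Fin d) ℂ).mulVec v q =
        ∑ j, hadR p q q j * v j := rfl
    rw [h0, hadR_row p q hpq v q, if_neg (fun h => hpq h.symm), if_pos rfl,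
      Finset.sum_pair hpq]
    simp [hpq]
    try ring
  have hA : TT e₀ μ p p p p =
      ∑ x ∈ ({p, q} : Finset (Fin d)), ∑ y ∈ ({p, q} : Finset (Fin d)),
        ∑ z ∈ ({p, q} : Finset (Fin d)), ∑ w ∈ ({p, q} : Finset (Fin d)),
        (fun _ : Fin d => rc) w * (starRingEnd ℂ) ((fun _ : Fin d => rc) z) *
          (fun _ : Fin d => rc) y * (starRingEnd ℂ) ((fun _ : Fin d => rc) x) *
          TT e₀ μ w z y x := by
    rw [TT_invariance e₀ μ (hadU p q hpq) p p p p]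
    rw [show (fun W : Matrix.unitaryGroup (Fin d) ℂ =>
        ((hadU p q hpq : Matrix (Fin d) (Fin d) ℂ).mulVec (psi e₀ W) p *
          (starRingEnd ℂ) ((hadU p q hpq : Matrix (Fin d) (Fin d) ℂ).mulVec (psi e₀ W) p) *
          (hadU p q hpq : Matrix (Fin d) (Fin d) ℂ).mulVec (psi e₀ W) p *
          (starRingEnd ℂ) ((hadU p q hpq : Matrix (Fin d) (Fin d) ℂ).mulVec (psi e₀ W) p))) =
        fun W : Matrix.unitaryGroup (Fin d) ℂ =>
        ((∑ x ∈ ({p, q} : Finset (Fin d)), (fun _ : Fin d => rc) x * psi e₀ W x) *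
          (starRingEnd ℂ) (∑ y ∈ ({p, q} : Finset (Fin d)), (fun _ : Fin d => rc) y * psi e₀ W y) *
          (∑ z ∈ ({p, q} : Finset (Fin d)), (fun _ : Fin d => rc) z * psi e₀ W z) *
          (starRingEnd ℂ) (∑ w ∈ ({p, q} : Finset (Fin d)), (fun _ : Fin d => rc) w * psi e₀ W w))
        from funext fun W => by rw [hrowp (psi e₀ W)]]
    exact integral_quad e₀ he₀ μ _ _ _ _ ({p, q} : Finset (Fin d))
  have hB : TT e₀ μ q q q q =
      ∑ x ∈ ({p, q} : Finset (Fin d)), ∑ y ∈ ({p, q} : Finset (Fin d)),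
        ∑ z ∈ ({p, q} : Finset (Fin d)), ∑ w ∈ ({p, q} : Finset (Fin d)),
        (fun x : Fin d => if x = q then -rc else rc) w *
          (starRingEnd ℂ) ((fun x : Fin d => if x = q then -rc else rc) z) *
          (fun x : Fin d => if x = q then -rc else rc) y *
          (starRingEnd ℂ) ((fun x : Fin d => if x = q then -rc else rc) x) *
          TT e₀ μ w z y x := by
    rw [TT_invariance e₀ μ (hadU p q hpq) q q q q]
    rw [show (fun W : Matrix.unitaryGroup (Fin d) ℂ =>
        ((hadU p q hpq : Matrix (Fin d) (Fin d) ℂ).mulVec (psi e₀ W) q *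
          (starRingEnd ℂ) ((hadU p q hpq : Matrix (Fin d) (Fin d) ℂ).mulVec (psi e₀ W) q) *
          (hadU p q hpq : Matrix (Fin d) (Fin d) ℂ).mulVec (psi e₀ W) q *
          (starRingEnd ℂ) ((hadU p q hpq : Matrix (Fin d) (Fin d) ℂ).mulVec (psi e₀ W) q))) =
        fun W : Matrix.unitaryGroup (Fin d) ℂ =>
        ((∑ x ∈ ({p, q} : Finset (Fin d)),
            (fun x : Fin d => if x = q then -rc else rc) x * psi e₀ W x) *
          (starRingEnd ℂ) (∑ y ∈ ({p, q} : Finset (Fin d)),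
            (fun x : Fin d => if x = q then -rc else rc) y * psi e₀ W y) *
          (∑ z ∈ ({p, q} : Finset (Fin d)),
            (fun x : Fin d => if x = q then -rc else rc) z * psi e₀ W z) *
          (starRingEnd ℂ) (∑ w ∈ ({p, q} : Finset (Fin d)),
            (fun x : Fin d => if x = q then -rc else rc) w * psi e₀ W w))
        from funext fun W => by rw [hrowq (psi e₀ W)]]
    exact integral_quad e₀ he₀ μ _ _ _ _ ({p, q} : Finset (Fin d))
  have hv : ∀ x y z w : Fin d, ¬((x = y ∧ z = w) ∨ (x = w ∧ z = y)) → TT e₀ μ x y z w = 0 :=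
    TT_vanish e₀ μ
  simp only [Finset.sum_pair hpq] at hA hB
  simp only [eq_self_iff_true, if_true, if_neg hpq, map_neg, conj_rc, mul_neg, neg_mul,
    neg_neg] at hA hB
  rw [hv p p p q (by simp [hpq, Ne.symm hpq]), hv p p q p (by simp [hpq, Ne.symm hpq]), hv p q p p (by simp [hpq, Ne.symm hpq]),
    hv q p p p (by simp [hpq, Ne.symm hpq]), hv q q q p (by simp [hpq, Ne.symm hpq]),
    hv q q p q (by simp [hpq, Ne.symm hpq]), hv q p q q (by simp [hpq, Ne.symm hpq]),
    hv p q q q (by simp [hpq, Ne.symm hpq]), hv p q p q (by simp [hpq, Ne.symm hpq]),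
    hv q p q p (by simp [hpq, Ne.symm hpq]),
    TT_perm1 e₀ μ p q, TT_perm2 e₀ μ p q, TT_perm3 e₀ μ p q] at hA hB
  ring_nf at hA hB
  rw [rc_pow_four] at hA hB
  have h1 : TT e₀ μ p p p p = TT e₀ μ q q q q := by linear_combination hA - hB
  exact ⟨h1, by linear_combination 2 * hA - (1/2 : ℂ) * h1⟩

lemma TT_norm (e₀ : Fin d → ℂ) (he₀ : star e₀ ⬝ᵥ e₀ = 1)
    (μ : Measure (Matrix.unitaryGroup (Fin d) ℂ)) [IsProbabilityMeasure μ] :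
    ∑ a : Fin d, ∑ c : Fin d, TT e₀ μ a a c c = 1 := by
  have hpt : ∀ W : Matrix.unitaryGroup (Fin d) ℂ,
      ∑ a : Fin d, ∑ c : Fin d, mm e₀ a a c c W = 1 := by
    intro W
    have h1 : ∀ a c : Fin d, mm e₀ a a c c W =
        ((starRingEnd ℂ) (psi e₀ W a) * psi e₀ W a) *
          ((starRingEnd ℂ) (psi e₀ W c) * psi e₀ W c) := by
      intro a c; rw [mm]; ring
    rw [Finset.sum_congr rfl (fun a _ => Finset.sum_congr rfl (fun c _ => h1 a c))]
    rw [← Finset.sum_mul_sum, psi_inner e₀ he₀ W, one_mul]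
  have h2 : ∑ a : Fin d, ∑ c : Fin d, TT e₀ μ a a c c =
      ∫ W, ∑ a : Fin d, ∑ c : Fin d, mm e₀ a a c c W ∂μ := by
    rw [MeasureTheory.integral_finset_sum _ (fun a _ => MeasureTheory.integrable_finset_sum _
      (fun c _ => mm_integrable e₀ he₀ μ a a c c))]
    refine Finset.sum_congr rfl fun a _ => ?_
    rw [MeasureTheory.integral_finset_sum _ (fun c _ => mm_integrable e₀ he₀ μ a a c c)]
    rfl
  rw [h2, show (fun W : Matrix.unitaryGroup (Fin d) ℂ =>
    ∑ a : Fin d, ∑ c : Fin d, mm e₀ a a c c W) = fun _ => (1:ℂ) from funext hpt]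
  simp

lemma TT_aacc (hd : 1 ≤ d) (e₀ : Fin d → ℂ) (he₀ : star e₀ ⬝ᵥ e₀ = 1)
    (μ : Measure (Matrix.unitaryGroup (Fin d) ℂ)) [μ.IsHaarMeasure] [IsProbabilityMeasure μ]
    (a c : Fin d) :
    TT e₀ μ a a c c = (1 + if a = c then 1 else 0) / ((d : ℂ) * ((d : ℂ) + 1)) := by
  have hd0 : (d:ℂ) ≠ 0 := Nat.cast_ne_zero.mpr (by omega)
  have hd1 : (d:ℂ) + 1 ≠ 0 := by
    have : ((d+1 : ℕ):ℂ) ≠ 0 := Nat.cast_ne_zero.mpr (by omega)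
    push_cast at this
    exact this
  rcases Nat.lt_or_ge d 2 with hd2 | hd2
  · have hd1' : d = 1 := by omega
    subst hd1'
    have hac : a = c := Subsingleton.elim a c
    subst hac
    have hpt : ∀ W : Matrix.unitaryGroup (Fin 1) ℂ, mm e₀ a a a a W = 1 := by
      intro W
      have h := psi_inner e₀ he₀ W
      rw [Fin.sum_univ_one] at h
      have ha0 : a = 0 := Subsingleton.elim a 0
      rw [mm, ha0]
      linear_combination ((starRingEnd ℂ) (psi e₀ W 0) * psi e₀ W 0 + 1) * h
    rw [if_pos rfl, TT, show (fun W : Matrix.unitaryGroup (Fin 1) ℂ => mm e₀ a a a a W)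
      = fun _ => (1:ℂ) from funext hpt]
    norm_num
  · set i0 : Fin d := ⟨0, by omega⟩ with hi0
    set γ := TT e₀ μ i0 i0 i0 i0 with hγ
    have hdiag : ∀ x : Fin d, TT e₀ μ x x x x = γ := by
      intro x
      by_cases h : x = i0
      · rw [h]
      · exact (TT_had e₀ he₀ μ x i0 h).1
    have hval : ∀ x y : Fin d, TT e₀ μ x x y y = if x = y then γ else γ/2 := by
      intro x y
      by_cases h : x = y
      · rw [if_pos h, h, hdiag y]
      · rw [if_neg h]
        have h2 := (TT_had e₀ he₀ μ x y h).2
        have h3 := hdiag x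
        linear_combination (-1/2 : ℂ) * h2 + (1/2 : ℂ) * h3
    have hnorm := TT_norm e₀ he₀ μ
    rw [Finset.sum_congr rfl (fun x (_ : x ∈ Finset.univ) =>
      Finset.sum_congr rfl (fun y (_ : y ∈ Finset.univ) => hval x y))] at hnorm
    have hsum : ∑ x : Fin d, ∑ y : Fin d, (if x = y then γ else γ/2)
        = (d:ℂ) * ((d:ℂ)+1) / 2 * γ := by
      have h1 : ∀ x : Fin d, ∑ y : Fin d, (if x = y then γ else γ/2)
          = (d:ℂ) * (γ/2) + γ/2 := by
        intro x
        have hsplit : ∀ y : Fin d, (if x = y then γ else γ/2)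
            = γ/2 + (if x = y then γ/2 else 0) := by
          intro y; split_ifs <;> ring
        rw [Finset.sum_congr rfl (fun y (_ : y ∈ Finset.univ) => hsplit y),
          Finset.sum_add_distrib, Finset.sum_const, Finset.sum_ite_eq, Finset.card_univ]
        simp [nsmul_eq_mul]
      rw [Finset.sum_congr rfl (fun x (_ : x ∈ Finset.univ) => h1 x), Finset.sum_const,
        Finset.card_univ]
      simp [nsmul_eq_mul, Fintype.card_fin]
      ring
    rw [hsum] at hnorm
    rw [hval a c]
    split_ifs with h
    · field_simp
      linear_combination 2 * hnorm
    · field_simp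
      linear_combination 2 * hnorm

/-- the full fourth-moment formula -/
lemma TT_full (hd : 1 ≤ d) (e₀ : Fin d → ℂ) (he₀ : star e₀ ⬝ᵥ e₀ = 1)
    (μ : Measure (Matrix.unitaryGroup (Fin d) ℂ)) [μ.IsHaarMeasure] [IsProbabilityMeasure μ]
    (a b c e : Fin d) :
    TT e₀ μ a b c e = ((if a = b then 1 else 0) * (if c = e then 1 else 0)
      + (if a = e then 1 else 0) * (if c = b then 1 else 0)) / ((d : ℂ) * ((d : ℂ) + 1)) := by
  by_cases h1 : a = b ∧ c = e
  · obtain ⟨hab, hce⟩ := h1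
    subst hab
    subst hce
    rw [TT_aacc hd e₀ he₀ μ a c]
    by_cases hac : a = c
    · simp [hac]
    · have hca : ¬ c = a := fun h => hac h.symm
      simp [hac, hca]
  · by_cases h2 : a = e ∧ c = b
    · obtain ⟨hae, hcb⟩ := h2
      subst hae
      subst hcb
      have hac : ¬ a = c := fun h => h1 ⟨h, h.symm⟩
      rw [TT_perm1 e₀ μ a c, TT_aacc hd e₀ he₀ μ a c]
      have hca : ¬ c = a := fun h => hac h.symm
      simp [hac, hca]
    · rw [TT_vanish e₀ μ a b c e (by tauto)]
      by_cases hab : a = b <;> by_cases hce : c = e <;> by_cases hae : a = e <;>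
        by_cases hcb : c = b <;> simp_all
end Stmt3Aux


/-- For `d × d` unitaries `U`, `V` and the Haar probability measure `μ`
on `U(d)`, with `e₀` a fixed unit vector: `C_HST(U,V) = ((d+1)/d) (1 − F̄(U,V))`. -/
theorem stmt3 (d : ℕ) (hd : 1 ≤ d) (U V : Matrix (Fin d) (Fin d) ℂ)
    (hU : U ∈ Matrix.unitaryGroup (Fin d) ℂ)
    (hV : V ∈ Matrix.unitaryGroup (Fin d) ℂ)
    (e₀ : Fin d → ℂ) (he₀ : star e₀ ⬝ᵥ e₀ = 1)
    (μ : Measure (Matrix.unitaryGroup (Fin d) ℂ))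
    [μ.IsHaarMeasure] [IsProbabilityMeasure μ] :
    CHSTd d U V = ((d : ℝ) + 1) / d * (1 - Fbar d U V e₀ μ) := by
  classical
  set M : Matrix (Fin d) (Fin d) ℂ := Vᴴ * U with hMdef
  have hd0 : (d:ℝ) ≠ 0 := Nat.cast_ne_zero.mpr (by omega)
  have hd0' : (d:ℂ) ≠ 0 := Nat.cast_ne_zero.mpr (by omega)
  have hd1' : (d:ℂ) + 1 ≠ 0 := by
    have : ((d+1 : ℕ):ℂ) ≠ 0 := Nat.cast_ne_zero.mpr (by omega)
    push_cast at this
    exact this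
  have hM1 : M * Mᴴ = 1 := by
    have hU1 : U * Uᴴ = 1 := by
      have := Matrix.mem_unitaryGroup_iff.mp hU
      rwa [Matrix.star_eq_conjTranspose] at this
    have hV1 : Vᴴ * V = 1 := by
      have := Matrix.mem_unitaryGroup_iff'.mp hV
      rwa [Matrix.star_eq_conjTranspose] at this
    rw [hMdef, Matrix.conjTranspose_mul, Matrix.conjTranspose_conjTranspose,
      Matrix.mul_assoc, ← Matrix.mul_assoc U, hU1, Matrix.one_mul, hV1]
  have htr : ∑ a : Fin d, ∑ b : Fin d, M a b * (starRingEnd ℂ) (M a b) = (d : ℂ) := by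
    have hdiag : ∀ a : Fin d, ∑ b : Fin d, M a b * (starRingEnd ℂ) (M a b) = (M * Mᴴ) a a := by
      intro a
      rw [Matrix.mul_apply]
      refine Finset.sum_congr rfl fun b _ => ?_
      rw [Matrix.conjTranspose_apply]
      rfl
    rw [Finset.sum_congr rfl (fun a (_ : a ∈ Finset.univ) => hdiag a), hM1]
    simp [Matrix.one_apply, Finset.card_univ]
  set z : Matrix.unitaryGroup (Fin d) ℂ → ℂ :=
    fun W => star (Stmt3Aux.psi e₀ W) ⬝ᵥ M.mulVec (Stmt3Aux.psi e₀ W) with hzdef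
  have hfid : ∀ W, fid d U V e₀ W = (z W * (starRingEnd ℂ) (z W)).re := by
    intro W
    have h0 : fid d U V e₀ W = ‖z W‖ ^ 2 := rfl
    rw [h0, Complex.mul_conj, Complex.ofReal_re, ← Complex.sq_norm]
  have hzpt : ∀ W, z W * (starRingEnd ℂ) (z W) =
      ∑ a : Fin d, ∑ b : Fin d, ∑ c : Fin d, ∑ e : Fin d,
        M c e * (starRingEnd ℂ) (M a b) * Stmt3Aux.mm e₀ e c a b W := by
    intro W
    have hz1 : z W = ∑ a : Fin d, ∑ b : Fin d,
        (starRingEnd ℂ) (Stmt3Aux.psi e₀ W a) * M a b * Stmt3Aux.psi e₀ W b := by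
      rw [hzdef]
      show dotProduct _ _ = _
      unfold dotProduct Matrix.mulVec
      refine Finset.sum_congr rfl fun a _ => ?_
      show star (Stmt3Aux.psi e₀ W) a * dotProduct _ _ = _
      unfold dotProduct
      rw [Finset.mul_sum]
      refine Finset.sum_congr rfl fun b _ => ?_
      rw [Pi.star_apply, RCLike.star_def]
      ring
    rw [hz1, map_sum]
    simp only [map_sum, _root_.map_mul, Complex.conj_conj, Finset.sum_mul, Finset.mul_sum]
    refine Finset.sum_congr rfl fun a _ => ?_
    refine Finset.sum_congr rfl fun b _ => ?_
    refine Finset.sum_congr rfl fun c _ => ?_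
    refine Finset.sum_congr rfl fun e _ => ?_
    rw [Stmt3Aux.mm]
    first
      | ring
      | (simp only [← hMdef]; ring)
  have hint : ∀ a b c e : Fin d, Integrable
      (fun W => M c e * (starRingEnd ℂ) (M a b) * Stmt3Aux.mm e₀ e c a b W) μ :=
    fun a b c e => (Stmt3Aux.mm_integrable e₀ he₀ μ e c a b).const_mul _
  have hFC : ∫ W, z W * (starRingEnd ℂ) (z W) ∂μ =
      (M.trace * (starRingEnd ℂ) M.trace + (d:ℂ)) / ((d:ℂ) * ((d:ℂ) + 1)) := by
    rw [show (fun W => z W * (starRingEnd ℂ) (z W)) = fun W =>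
        ∑ a : Fin d, ∑ b : Fin d, ∑ c : Fin d, ∑ e : Fin d,
          M c e * (starRingEnd ℂ) (M a b) * Stmt3Aux.mm e₀ e c a b W from funext hzpt]
    rw [MeasureTheory.integral_finset_sum _ (fun a _ => MeasureTheory.integrable_finset_sum _
      (fun b _ => MeasureTheory.integrable_finset_sum _ (fun c _ =>
        MeasureTheory.integrable_finset_sum _ (fun e _ => hint a b c e))))]
    have hstep : ∀ a : Fin d, (∫ W, ∑ b : Fin d, ∑ c : Fin d, ∑ e : Fin d,
        M c e * (starRingEnd ℂ) (M a b) * Stmt3Aux.mm e₀ e c a b W ∂μ)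
        = ∑ b : Fin d, ∑ c : Fin d, ∑ e : Fin d,
          M c e * (starRingEnd ℂ) (M a b) * Stmt3Aux.TT e₀ μ e c a b := by
      intro a
      rw [MeasureTheory.integral_finset_sum _ (fun b _ => MeasureTheory.integrable_finset_sum _
        (fun c _ => MeasureTheory.integrable_finset_sum _ (fun e _ => hint a b c e)))]
      refine Finset.sum_congr rfl fun b _ => ?_
      rw [MeasureTheory.integral_finset_sum _ (fun c _ =>
        MeasureTheory.integrable_finset_sum _ (fun e _ => hint a b c e))]
      refine Finset.sum_congr rfl fun c _ => ?_
      rw [MeasureTheory.integral_finset_sum _ (fun e _ => hint a b c e)]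
      refine Finset.sum_congr rfl fun e _ => ?_
      rw [Stmt3Aux.TT, MeasureTheory.integral_const_mul]
    rw [Finset.sum_congr rfl (fun a (_ : a ∈ Finset.univ) => hstep a)]
    have hterm : ∀ a b c e : Fin d, M c e * (starRingEnd ℂ) (M a b) * Stmt3Aux.TT e₀ μ e c a b
        = ((if e = c then (if a = b then M c e * (starRingEnd ℂ) (M a b) else 0) else 0)
          + (if e = b then (if a = c then M c e * (starRingEnd ℂ) (M a b) else 0) else 0))
            / ((d:ℂ) * ((d:ℂ) + 1)) := by
      intro a b c e
      rw [Stmt3Aux.TT_full hd e₀ he₀ μ e c a b]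
      split_ifs <;> ring
    rw [Finset.sum_congr rfl (fun a (_ : a ∈ Finset.univ) =>
      Finset.sum_congr rfl (fun b (_ : b ∈ Finset.univ) =>
        Finset.sum_congr rfl (fun c (_ : c ∈ Finset.univ) =>
          Finset.sum_congr rfl (fun e (_ : e ∈ Finset.univ) => hterm a b c e))))]
    simp only [← Finset.sum_div, Finset.sum_add_distrib]
    have hS1 : ∑ a : Fin d, ∑ b : Fin d, ∑ c : Fin d, ∑ e : Fin d,
        (if e = c then (if a = b then M c e * (starRingEnd ℂ) (M a b) else 0) else 0)
        = M.trace * (starRingEnd ℂ) M.trace := by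
      have h1 : ∀ a b c : Fin d, (∑ e : Fin d,
          if e = c then (if a = b then M c e * (starRingEnd ℂ) (M a b) else 0) else 0)
          = if a = b then M c c * (starRingEnd ℂ) (M a b) else 0 := by
        intro a b c
        rw [Finset.sum_ite_eq' Finset.univ c
          (fun e => if a = b then M c e * (starRingEnd ℂ) (M a b) else 0)]
        simp
      have h2 : ∀ a b : Fin d, (∑ c : Fin d,
          if a = b then M c c * (starRingEnd ℂ) (M a b) else 0)
          = if a = b then M.trace * (starRingEnd ℂ) (M a b) else 0 := by
        intro a b
        split_ifs
        · rw [Matrix.trace, ← Finset.sum_mul]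
          rfl
        · simp
      have h3 : ∀ a : Fin d, (∑ b : Fin d,
          if a = b then M.trace * (starRingEnd ℂ) (M a b) else 0)
          = M.trace * (starRingEnd ℂ) (M a a) := by
        intro a
        rw [Finset.sum_ite_eq Finset.univ a
          (fun b => M.trace * (starRingEnd ℂ) (M a b))]
        simp
      rw [Finset.sum_congr rfl (fun a (_ : a ∈ Finset.univ) =>
        Finset.sum_congr rfl (fun b (_ : b ∈ Finset.univ) =>
          Finset.sum_congr rfl (fun c (_ : c ∈ Finset.univ) => h1 a b c)))]
      rw [Finset.sum_congr rfl (fun a (_ : a ∈ Finset.univ) =>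
        Finset.sum_congr rfl (fun b (_ : b ∈ Finset.univ) => h2 a b))]
      rw [Finset.sum_congr rfl (fun a (_ : a ∈ Finset.univ) => h3 a)]
      rw [← Finset.mul_sum]
      congr 1
      rw [Matrix.trace, map_sum]
      rfl
    have hS2 : ∑ a : Fin d, ∑ b : Fin d, ∑ c : Fin d, ∑ e : Fin d,
        (if e = b then (if a = c then M c e * (starRingEnd ℂ) (M a b) else 0) else 0)
        = (d : ℂ) := by
      have h1 : ∀ a b c : Fin d, (∑ e : Fin d,
          if e = b then (if a = c then M c e * (starRingEnd ℂ) (M a b) else 0) else 0)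
          = if a = c then M c b * (starRingEnd ℂ) (M a b) else 0 := by
        intro a b c
        rw [Finset.sum_ite_eq' Finset.univ b
          (fun e => if a = c then M c e * (starRingEnd ℂ) (M a b) else 0)]
        simp
      have h2 : ∀ a b : Fin d, (∑ c : Fin d,
          if a = c then M c b * (starRingEnd ℂ) (M a b) else 0)
          = M a b * (starRingEnd ℂ) (M a b) := by
        intro a b
        rw [Finset.sum_ite_eq Finset.univ a (fun c => M c b * (starRingEnd ℂ) (M a b))]
        simp
      rw [Finset.sum_congr rfl (fun a (_ : a ∈ Finset.univ) =>
        Finset.sum_congr rfl (fun b (_ : b ∈ Finset.univ) =>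
          Finset.sum_congr rfl (fun c (_ : c ∈ Finset.univ) => h1 a b c)))]
      rw [Finset.sum_congr rfl (fun a (_ : a ∈ Finset.univ) =>
        Finset.sum_congr rfl (fun b (_ : b ∈ Finset.univ) => h2 a b))]
      exact htr
    rw [hS1, hS2]
  have hzzInt : Integrable (fun W => z W * (starRingEnd ℂ) (z W)) μ := by
    rw [show (fun W => z W * (starRingEnd ℂ) (z W)) = fun W =>
        ∑ a : Fin d, ∑ b : Fin d, ∑ c : Fin d, ∑ e : Fin d,
          M c e * (starRingEnd ℂ) (M a b) * Stmt3Aux.mm e₀ e c a b W from funext hzpt]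
    exact MeasureTheory.integrable_finset_sum _ (fun a _ => MeasureTheory.integrable_finset_sum _
      (fun b _ => MeasureTheory.integrable_finset_sum _ (fun c _ =>
        MeasureTheory.integrable_finset_sum _ (fun e _ => hint a b c e))))
  have hFbar : Fbar d U V e₀ μ =
      (Complex.normSq M.trace + d) / ((d:ℝ) * ((d:ℝ) + 1)) := by
    rw [Fbar, show (fun W => fid d U V e₀ W) = fun W => (z W * (starRingEnd ℂ) (z W)).re
      from funext hfid]
    have hre := _root_.integral_re (μ := μ) hzzInt
    rw [show (fun W => (z W * (starRingEnd ℂ) (z W)).re)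
      = fun W => RCLike.re (z W * (starRingEnd ℂ) (z W)) from rfl]
    rw [hre, hFC]
    rw [show M.trace * (starRingEnd ℂ) M.trace = (Complex.normSq M.trace : ℂ)
      from Complex.mul_conj _]
    simp only [RCLike.re_to_complex, ← Complex.ofReal_natCast, ← Complex.ofReal_one,
      ← Complex.ofReal_add, ← Complex.ofReal_mul, ← Complex.ofReal_div, Complex.ofReal_re]
  rw [CHSTd, hFbar]
  rw [show ‖M.trace‖ ^ 2 = Complex.normSq M.trace by
    rw [Complex.sq_norm]]
  have hd1 : (d:ℝ) + 1 ≠ 0 := by positivity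
  field_simp
  ring

end
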